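/- Let D be an Enriques diagram and suppose p and q are two distinct minimal elements (with respect to the tree order of D) of a subset C of vertices of D. Let w be the maximal vertex of D such that both p and q are infinitely near or equal to w (i.e., w ≤ p and w ≤ q and w is maximal with this property). Then in the dual graph Γ_D, the chain between p and q is the union ch(q,w) ∪ ch(w,p); in particular, w lies on the path between p and q in Γ_D. -/

import Mathlib

/-- An Enriques diagram: a finite rooted tree (partial order `le`, each non-root
vertex with immediate predecessor `pred`) with a proximity relation `prox`
satisfying the standard axioms. -/
structure EnriquesDiagram (V : Type) [Fintype V] [DecidableEq V] where
  le : V → V → Prop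
  le_refl : ∀ a, le a a
  le_trans : ∀ a b c, le a b → le b c → le a c
  le_antisymm : ∀ a b, le a b → le b a → a = b
  root : V
  root_le : ∀ v, le root v
  pred : V → V
  pred_le : ∀ v, v ≠ root → le (pred v) v
  pred_ne : ∀ v, v ≠ root → pred v ≠ v
  pred_max : ∀ v q, v ≠ root → le q v → q ≠ v → le q (pred v)
  prox : V → V → Prop
  prox_pred : ∀ v, v ≠ root → prox v (pred v)
  root_not_prox : ∀ q, ¬ prox root q
  prox_gt : ∀ p q, prox p q → le q p ∧ p ≠ q
  prox_at_most_two : ∀ p a b c, prox p a → prox p b → prox p c → a = b ∨ b = c ∨ a = c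
  third_unique : ∀ p q a b, prox p q → prox a p → prox a q → prox b p → prox b q → a = b
  prox_pred_prox : ∀ p q', p ≠ root → prox p q' → q' ≠ pred p → prox (pred p) q'

namespace EnriquesDiagram

variable {V : Type} [Fintype V] [DecidableEq V] (D : EnriquesDiagram V)

/-- Number of vertices of `D` proximate to `p`. -/
noncomputable def r (p : V) : ℕ := Set.ncard {q | D.prox q p}

/-- Weight of `p` in the dual graph: `r p + 1`. -/
noncomputable def omega (p : V) : ℕ := D.r p + 1

/-- `p` is extremal: it has no successor. -/
def Extremal (p : V) : Prop := ∀ q, D.le p q → q = p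

/-- `p` is free: proximate to exactly one vertex. -/
def Free (p : V) : Prop := ∃! q, D.prox p q

/-- `p` is satellite: proximate to two distinct vertices. -/
def Satellite (p : V) : Prop := ∃ q₁ q₂, q₁ ≠ q₂ ∧ D.prox p q₁ ∧ D.prox p q₂

/-- `p` is maximal among the vertices of `D` proximate to `q`. -/
def MaxProx (p q : V) : Prop := D.prox p q ∧ ∀ u, D.prox u q → D.le p u → u = p

/-- The dual graph `Γ_D`: `p` and `q` are adjacent iff one is maximal among the
vertices proximate to the other. -/
def dualGraph : SimpleGraph V where
  Adj p q := p ≠ q ∧ (D.MaxProx p q ∨ D.MaxProx q p)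
  symm := by
    constructor
    intro p q h
    exact ⟨h.1.symm, h.2.symm⟩
  loopless := by
    constructor
    intro p h
    exact h.1 rfl

/-! ### Auxiliary lemmas -/

lemma eq_root_of_le_root {v : V} (h : D.le v D.root) : v = D.root :=
  D.le_antisymm _ _ h (D.root_le v)

lemma ne_root_of_gt {a b : V} (hab : D.le a b) (hne : a ≠ b) : b ≠ D.root := by
  intro hb; exact hne (by rw [hb] at hab ⊢; exact D.eq_root_of_le_root hab)

lemma le_pred_of_lt {z x : V} (h : D.le z x) (hne : z ≠ x) : D.le z (D.pred x) :=
  D.pred_max x z (D.ne_root_of_gt h hne) h hne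

/-- number of vertices below `x` (inclusive). -/
noncomputable def below (x : V) : ℕ := Set.ncard {u | D.le u x}

lemma below_mono {a b : V} (h : D.le a b) : D.below a ≤ D.below b :=
  Set.ncard_le_ncard (fun _ hu => D.le_trans _ _ _ hu h) (Set.toFinite _)

lemma below_strict_mono {a b : V} (h : D.le a b) (hne : a ≠ b) :
    D.below a < D.below b := by
  refine Set.ncard_lt_ncard ⟨fun _ hu => D.le_trans _ _ _ hu h, fun hb => ?_⟩ (Set.toFinite _)
  have : (b : V) ∈ {u | D.le u b} := D.le_refl b
  have hba : D.le b a := hb this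
  exact hne (D.le_antisymm _ _ h hba)

lemma below_pos (x : V) : 0 < D.below x :=
  (Set.ncard_pos (Set.toFinite _)).mpr ⟨x, D.le_refl x⟩

lemma below_pred_lt {x : V} (hx : x ≠ D.root) : D.below (D.pred x) < D.below x :=
  D.below_strict_mono (D.pred_le x hx) (D.pred_ne x hx)

/-- The ancestors of a vertex are totally ordered. -/
lemma anc_total {x z z' : V} (hz : D.le z x) (hz' : D.le z' x) :
    D.le z z' ∨ D.le z' z := by
  have H : ∀ n x, D.below x ≤ n → ∀ z z', D.le z x → D.le z' x →
      D.le z z' ∨ D.le z' z := by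
    intro n
    induction n with
    | zero => intro x hx; exact absurd hx (by simpa using (D.below_pos x).ne')
    | succ n ih =>
      intro x hx z z' hz hz'
      by_cases h1 : z = x
      · exact Or.inr (h1 ▸ hz')
      by_cases h2 : z' = x
      · exact Or.inl (h2 ▸ hz)
      have hx' : x ≠ D.root := D.ne_root_of_gt hz h1
      have := D.below_pred_lt hx'
      exact ih (D.pred x) (by omega) z z' (D.le_pred_of_lt hz h1) (D.le_pred_of_lt hz' h2)
  exact H (D.below x) x le_rfl z z' hz hz'

/-- Everything strictly between `b` and a vertex proximate to `b` is proximate to `b`. -/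
lemma prox_down {a b : V} (hab : D.prox a b) :
    ∀ x, D.le x a → D.le b x → x ≠ b → D.prox x b := by
  have H : ∀ n a, D.below a ≤ n → D.prox a b → ∀ x, D.le x a → D.le b x → x ≠ b →
      D.prox x b := by
    intro n
    induction n with
    | zero => intro a ha; exact absurd ha (by simpa using (D.below_pos a).ne')
    | succ n ih =>
      intro a ha hab x hxa hbx hxb
      by_cases hx : x = a
      · exact hx ▸ hab
      have haroot : a ≠ D.root := by
        intro h; rw [h] at hab; exact D.root_not_prox _ hab
      have hxpa : D.le x (D.pred a) := D.le_pred_of_lt hxa hx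
      by_cases hbp : b = D.pred a
      · exact absurd (D.le_antisymm _ _ (hbp ▸ hxpa) hbx) hxb
      · have := D.below_pred_lt haroot
        exact ih (D.pred a) (by omega) (D.prox_pred_prox a b haroot hab hbp) x hxpa hbx hxb
  exact fun x => H (D.below a) a le_rfl hab x

/-- Existence of the child of `v` in the direction of `x`. -/
lemma exists_child {v x : V} (hvx : D.le v x) (hne : v ≠ x) :
    ∃ c, c ≠ D.root ∧ D.pred c = v ∧ D.le c x := by
  have H : ∀ n x, D.below x ≤ n → D.le v x → v ≠ x →
      ∃ c, c ≠ D.root ∧ D.pred c = v ∧ D.le c x := by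
    intro n
    induction n with
    | zero => intro x hx; exact absurd hx (by simpa using (D.below_pos x).ne')
    | succ n ih =>
      intro x hx hvx hne
      have hxroot : x ≠ D.root := D.ne_root_of_gt hvx hne
      by_cases hp : D.pred x = v
      · exact ⟨x, hxroot, hp, D.le_refl x⟩
      · have hvp : D.le v (D.pred x) := D.le_pred_of_lt hvx hne
        have := D.below_pred_lt hxroot
        obtain ⟨c, h1, h2, h3⟩ := ih (D.pred x) (by omega) hvp (fun h => hp h.symm)
        exact ⟨c, h1, h2, D.le_trans _ _ _ h3 (D.pred_le x hxroot)⟩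
  exact H (D.below x) x le_rfl hvx hne

/-- A nonempty set of vertices has a maximal element. -/
lemma exists_max (S : Set V) (h : S.Nonempty) :
    ∃ m ∈ S, ∀ z ∈ S, D.le m z → z = m := by
  obtain ⟨m, hm, hmax⟩ := Set.Finite.exists_maximalFor D.below S (Set.toFinite S) h
  refine ⟨m, hm, fun z hz hmz => ?_⟩
  by_contra hne
  exact absurd (hmax hz (D.below_mono hmz)) (not_le.mpr (D.below_strict_mono hmz (Ne.symm hne)))

/-- Existence of the meet of two vertices. -/
lemma exists_meet (x y : V) :
    ∃ m, D.le m x ∧ D.le m y ∧ ∀ z, D.le z x → D.le z y → D.le z m := by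
  obtain ⟨m, ⟨hmx, hmy⟩, hmax⟩ :=
    D.exists_max {z | D.le z x ∧ D.le z y} ⟨D.root, D.root_le x, D.root_le y⟩
  refine ⟨m, hmx, hmy, fun z hzx hzy => ?_⟩
  rcases D.anc_total hzx hmx with h | h
  · exact h
  · exact (hmax z ⟨hzx, hzy⟩ h).symm ▸ D.le_refl m

/-- Two vertices proximate to `b` having a common ancestor strictly above `b`
are comparable. -/
lemma prox_comparable {x y b z : V} (hx : D.prox x b) (hy : D.prox y b)
    (hzx : D.le z x) (hzy : D.le z y) (hbz : D.le b z) (hzb : z ≠ b) :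
    D.le x y ∨ D.le y x := by
  obtain ⟨m, hmx, hmy, hmax⟩ := D.exists_meet x y
  have hzm : D.le z m := hmax z hzx hzy
  have hbm : D.le b m := D.le_trans _ _ _ hbz hzm
  have hmb : m ≠ b := by
    intro h; rw [h] at hzm; exact hzb (D.le_antisymm _ _ hzm hbz)
  by_cases hmxe : m = x
  · exact Or.inl (hmxe ▸ hmy)
  by_cases hmye : m = y
  · exact Or.inr (hmye ▸ hmx)
  obtain ⟨c, hcr, hcp, hcx⟩ := D.exists_child hmx hmxe
  obtain ⟨d, hdr, hdp, hdy⟩ := D.exists_child hmy hmye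
  have hmc : D.le m c := hcp ▸ D.pred_le c hcr
  have hmd : D.le m d := hdp ▸ D.pred_le d hdr
  have hcm : c ≠ m := fun h => D.pred_ne c hcr (hcp.trans h.symm)
  have hdm : d ≠ m := fun h => D.pred_ne d hdr (hdp.trans h.symm)
  have hcb : c ≠ b := by
    intro h; subst h
    exact hmb (D.le_antisymm _ _ (hcp ▸ D.pred_le _ hcr) hbm)
  have hdb : d ≠ b := by
    intro h; subst h
    exact hmb (D.le_antisymm _ _ (hdp ▸ D.pred_le _ hdr) hbm)
  have hpcb : D.prox c b := D.prox_down hx c hcx (D.le_trans _ _ _ hbm hmc) hcb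
  have hpdb : D.prox d b := D.prox_down hy d hdy (D.le_trans _ _ _ hbm hmd) hdb
  have hpmb : D.prox m b := D.prox_down hx m hmx hbm hmb
  have hpcm : D.prox c m := hcp ▸ D.prox_pred c hcr
  have hpdm : D.prox d m := hdp ▸ D.prox_pred d hdr
  have hcd : c = d := D.third_unique m b c d hpmb hpcm hpcb hpdm hpdb
  subst hcd
  exact absurd (D.le_antisymm _ _ (hmax c hcx hdy) hmc) hcm

lemma exists_tip {c : V} (hc : c ≠ D.root) :
    ∃ t, D.MaxProx t (D.pred c) ∧ D.le c t := by
  obtain ⟨t, ⟨ht1, ht2⟩, hmax⟩ := D.exists_max {u | D.prox u (D.pred c) ∧ D.le c u}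
    ⟨c, D.prox_pred c hc, D.le_refl c⟩
  exact ⟨t, ⟨ht1, fun u hu htu => hmax u ⟨hu, D.le_trans _ _ _ ht2 htu⟩ htu⟩, ht2⟩

lemma tip_unique {c t t' : V} (hc : c ≠ D.root)
    (ht : D.MaxProx t (D.pred c)) (hct : D.le c t)
    (ht' : D.MaxProx t' (D.pred c)) (hct' : D.le c t') : t = t' := by
  have hpc : D.le (D.pred c) c := D.pred_le c hc
  have hcp : c ≠ D.pred c := fun h => D.pred_ne c hc h.symm
  rcases D.prox_comparable ht.1 ht'.1 hct hct' hpc hcp with h | h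
  · exact (ht.2 t' ht'.1 h).symm
  · exact ht'.2 t ht.1 h

/-- The tip over `c`: the maximal vertex proximate to `pred c` lying above `c`. -/
noncomputable def tip (c : V) : V :=
  if h : c ≠ D.root then (D.exists_tip h).choose else c

lemma tip_spec {c : V} (hc : c ≠ D.root) :
    D.MaxProx (D.tip c) (D.pred c) ∧ D.le c (D.tip c) := by
  rw [tip, dif_pos hc]; exact (D.exists_tip hc).choose_spec

lemma adj_tip {c : V} (hc : c ≠ D.root) :
    D.dualGraph.Adj (D.pred c) (D.tip c) := by
  obtain ⟨h1, _⟩ := D.tip_spec hc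
  exact ⟨(D.prox_gt _ _ h1.1).2.symm, Or.inr h1⟩

lemma le_tip {c : V} (hc : c ≠ D.root) : D.le (D.pred c) (D.tip c) :=
  (D.prox_gt _ _ (D.tip_spec hc).1.1).1

/-- Every vertex above `v` is joined to `v` by a walk staying above `v`. -/
lemma exists_walk_above : ∀ (v x : V), D.le v x →
    ∃ wk : D.dualGraph.Walk x v, ∀ u ∈ wk.support, D.le v u := by
  have H : ∀ (n : ℕ) (v : V), (Set.ncard {u | D.le v u}) ≤ n → ∀ x, D.le v x →
      ∃ wk : D.dualGraph.Walk x v, ∀ u ∈ wk.support, D.le v u := by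
    intro n
    induction n with
    | zero =>
      intro v hv
      exact absurd (Nat.le_zero.mp hv) ((Set.ncard_pos (Set.toFinite _)).mpr
        ⟨v, D.le_refl v⟩).ne'
    | succ n ih =>
      intro v hv x hvx
      by_cases hxv : x = v
      · subst hxv; exact ⟨SimpleGraph.Walk.nil, by simp [D.le_refl]⟩
      obtain ⟨c, hcr, hcp, hcx⟩ := D.exists_child hvx (fun h => hxv h.symm)
      have hvc : D.le v c := hcp ▸ D.pred_le c hcr
      have hcv : c ≠ v := fun h => D.pred_ne c hcr (hcp.trans h.symm)
      -- the subtree above c is strictly smaller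
      have hsub : Set.ncard {u | D.le c u} < Set.ncard {u | D.le v u} := by
        refine Set.ncard_lt_ncard ⟨fun u hu => D.le_trans _ _ _ hvc hu, fun hsup => ?_⟩
          (Set.toFinite _)
        exact hcv (D.le_antisymm _ _ (hsup (D.le_refl v)) hvc)
      obtain ⟨w1, hw1⟩ := ih c (by omega) x hcx
      obtain ⟨w2, hw2⟩ := ih c (by omega) (D.tip c) (D.tip_spec hcr).2
      have hadj : D.dualGraph.Adj (D.tip c) v := hcp ▸ (D.adj_tip hcr).symm
      refine ⟨w1.append (w2.reverse.append (SimpleGraph.Walk.cons hadj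
        SimpleGraph.Walk.nil)), ?_⟩
      intro u hu
      rw [SimpleGraph.Walk.mem_support_append_iff] at hu
      rcases hu with hu | hu
      · exact D.le_trans _ _ _ hvc (hw1 u hu)
      rw [SimpleGraph.Walk.mem_support_append_iff] at hu
      rcases hu with hu | hu
      · rw [SimpleGraph.Walk.support_reverse, List.mem_reverse] at hu
        exact D.le_trans _ _ _ hvc (hw2 u hu)
      · simp only [SimpleGraph.Walk.support_cons, SimpleGraph.Walk.support_nil, List.mem_cons,
          List.mem_singleton, List.not_mem_nil, or_false] at hu
        rcases hu with hu | hu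
        · exact hu ▸ D.le_trans _ _ _ hvc (D.tip_spec hcr).2
        · exact hu ▸ D.le_refl v
  exact fun v x h => H _ v le_rfl x h

lemma dualGraph_connected : D.dualGraph.Connected := by
  have hne : Nonempty V := ⟨D.root⟩
  refine ⟨fun u v => ?_⟩
  obtain ⟨w1, _⟩ := D.exists_walk_above D.root u (D.root_le u)
  obtain ⟨w2, _⟩ := D.exists_walk_above D.root v (D.root_le v)
  exact ⟨w1.append w2.reverse⟩

/-- A connected graph on a finite vertex set has at least `card V - 1` edges. -/
lemma aux_conn_card_le (G : SimpleGraph V) (hG : G.Connected) :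
    Fintype.card V ≤ G.edgeSet.ncard + 1 := by
  classical
  obtain ⟨r⟩ : Nonempty V := hG.nonempty
  have hex : ∀ v : V, ∃ u, v ≠ r → G.Adj v u ∧ G.dist u r < G.dist v r := by
    intro v
    by_cases hv : v = r
    · exact ⟨v, fun h => absurd hv h⟩
    · obtain ⟨p, hp⟩ := hG.exists_walk_length_eq_dist v r
      cases p with
      | nil => exact absurd rfl hv
      | @cons _ x _ h q =>
        refine ⟨x, fun _ => ⟨h, ?_⟩⟩
        have h1 : G.dist x r ≤ q.length := SimpleGraph.dist_le q
        have h2 : q.length + 1 = G.dist v r := by simpa using hp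
        omega
  choose u hu using hex
  have hinj : Set.InjOn (fun v => s(v, u v)) {v | v ≠ r} := by
    intro a ha b hb hab
    simp only [Sym2.eq, Sym2.rel_iff', Prod.mk.injEq, Prod.swap_prod_mk] at hab
    rcases hab with ⟨h1, _⟩ | ⟨h1, h2⟩
    · exact h1
    · exfalso
      have da := (hu a ha).2
      have db := (hu b hb).2
      rw [h2] at da
      rw [← h1] at db
      omega
  have himg : (fun v => s(v, u v)) '' {v | v ≠ r} ⊆ G.edgeSet := by
    rintro e ⟨v, hv, rfl⟩
    exact (hu v hv).1
  have h1 : Set.ncard {v : V | v ≠ r} ≤ G.edgeSet.ncard := by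
    rw [← Set.ncard_image_of_injOn hinj]
    exact Set.ncard_le_ncard himg (Set.toFinite _)
  have h2 : Set.ncard {v : V | v ≠ r} + 1 = Fintype.card V := by
    have hins : insert r {v : V | v ≠ r} = (Set.univ : Set V) := by
      ext v; by_cases h : v = r <;> simp [h]
    have := Set.ncard_insert_of_notMem (a := r) (s := {v : V | v ≠ r})
      (by simp) (Set.toFinite _)
    rw [hins] at this
    rw [← this, Set.ncard_univ, Nat.card_eq_fintype_card]
  omega

lemma aux_conn_del (G : SimpleGraph V) {v w : V} (hG : G.Connected)
    (hr : (G \ SimpleGraph.fromEdgeSet {s(v, w)}).Reachable v w) :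
    (G \ SimpleGraph.fromEdgeSet {s(v, w)}).Connected := by
  have hne : Nonempty V := hG.nonempty
  refine ⟨fun a b => ?_⟩
  obtain ⟨p⟩ := hG.preconnected a b
  induction p with
  | nil => exact SimpleGraph.Reachable.refl _
  | @cons a x b h q ih =>
    refine SimpleGraph.Reachable.trans ?_ ih
    by_cases he : s(a, x) = s(v, w)
    · simp only [Sym2.eq, Sym2.rel_iff', Prod.mk.injEq, Prod.swap_prod_mk] at he
      rcases he with ⟨rfl, rfl⟩ | ⟨rfl, rfl⟩
      · exact hr
      · exact hr.symm
    · refine SimpleGraph.Adj.reachable ?_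
      rw [SimpleGraph.sdiff_adj, SimpleGraph.fromEdgeSet_adj]
      exact ⟨h, by simp [he]⟩

lemma aux_acyclic_of_card (G : SimpleGraph V) (hG : G.Connected)
    (hcard : G.edgeSet.ncard + 1 = Fintype.card V) : G.IsAcyclic := by
  classical
  intro v c hc
  cases c with
  | nil => exact hc.ne_nil rfl
  | @cons _ x _ h q =>
    have he_mem : s(v, x) ∈ (SimpleGraph.Walk.cons h q).edges := by
      simp [SimpleGraph.Walk.edges_cons]
    have hnb : ¬ G.IsBridge s(v, x) := by
      rw [SimpleGraph.isBridge_iff_adj_and_forall_cycle_notMem]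
      push_neg
      exact ⟨v, SimpleGraph.Walk.cons h q, hc, he_mem⟩
      exact h
    rw [SimpleGraph.isBridge_iff] at hnb
    push_neg at hnb
    have hreach := hnb
    have hconn' := aux_conn_del G hG hreach
    have hle := aux_conn_card_le _ hconn'
    have hE : (G \ SimpleGraph.fromEdgeSet {s(v, x)}).edgeSet = G.edgeSet \ {s(v, x)} := by
      rw [SimpleGraph.edgeSet_sdiff, SimpleGraph.edgeSet_fromEdgeSet,
        SimpleGraph.edgeSet_sdiff_sdiff_isDiag]
    have hmem : s(v, x) ∈ G.edgeSet := h
    have hcard' : (G.edgeSet \ {s(v, x)}).ncard = G.edgeSet.ncard - 1 :=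
      Set.ncard_diff_singleton_of_mem hmem
    have hpos : 0 < G.edgeSet.ncard := (Set.ncard_pos (Set.toFinite _)).mpr ⟨_, hmem⟩
    rw [hE, hcard'] at hle
    omega

lemma pred_lt_tip {c : V} (hc : c ≠ D.root) : D.pred c ≠ D.tip c :=
  fun h => (D.prox_gt _ _ (D.tip_spec hc).1.1).2 h.symm

/-- The edges of the dual graph are exactly the edges `{tip c, pred c}` for the
non-root vertices `c`. -/
lemma dualGraph_edgeSet :
    (fun c => s(D.tip c, D.pred c)) '' {c | c ≠ D.root} = D.dualGraph.edgeSet := by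
  ext e
  constructor
  · rintro ⟨c, hc, rfl⟩
    exact (D.adj_tip hc).symm
  · intro he
    induction e using Sym2.ind with
    | _ a b =>
      rw [SimpleGraph.mem_edgeSet] at he
      obtain ⟨hne, hmax | hmax⟩ := he
      · have hba : D.le b a := (D.prox_gt _ _ hmax.1).1
        obtain ⟨c, hcr, hcp, hca⟩ := D.exists_child hba (fun h => hne h.symm)
        have heq : D.tip c = a :=
          D.tip_unique hcr (D.tip_spec hcr).1 (D.tip_spec hcr).2 (hcp ▸ hmax) hca
        exact ⟨c, hcr, by dsimp only; rw [heq, hcp]⟩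
      · have hab : D.le a b := (D.prox_gt _ _ hmax.1).1
        obtain ⟨c, hcr, hcp, hca⟩ := D.exists_child hab hne
        have heq : D.tip c = b :=
          D.tip_unique hcr (D.tip_spec hcr).1 (D.tip_spec hcr).2 (hcp ▸ hmax) hca
        exact ⟨c, hcr, by dsimp only; rw [heq, hcp, Sym2.eq_swap]⟩

lemma dualGraph_injOn :
    Set.InjOn (fun c => s(D.tip c, D.pred c)) {c | c ≠ D.root} := by
  intro c hc c' hc' hcc
  simp only [Sym2.eq, Sym2.rel_iff', Prod.mk.injEq, Prod.swap_prod_mk] at hcc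
  rcases hcc with ⟨ht, hp⟩ | ⟨h1, h2⟩
  · -- same tip, same pred
    have hct : D.le c (D.tip c) := (D.tip_spec hc).2
    have hct' : D.le c' (D.tip c') := (D.tip_spec hc').2
    rw [← ht] at hct'
    rcases D.anc_total hct hct' with h | h
    · by_contra hne
      have : D.le c (D.pred c') := D.pred_max c' c hc' h hne
      rw [← hp] at this
      exact D.pred_ne c hc (D.le_antisymm _ _ (D.pred_le c hc) this)
    · by_contra hne
      have : D.le c' (D.pred c) := D.pred_max c c' hc h (fun hh => hne hh.symm)
      rw [hp] at this
      exact D.pred_ne c' hc' (D.le_antisymm _ _ (D.pred_le c' hc') this)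
  · -- crossed case: tip c = pred c' and pred c = tip c'
    exfalso
    have l1 : D.le (D.pred c) (D.tip c) := D.le_tip hc
    have l2 : D.le (D.pred c') (D.tip c') := D.le_tip hc'
    rw [← h1, ← h2] at l2
    exact D.pred_lt_tip hc (D.le_antisymm _ _ l1 l2)

lemma dualGraph_card :
    D.dualGraph.edgeSet.ncard + 1 = Fintype.card V := by
  have h1 : D.dualGraph.edgeSet.ncard = Set.ncard {c : V | c ≠ D.root} := by
    rw [← D.dualGraph_edgeSet, Set.ncard_image_of_injOn D.dualGraph_injOn]
  have hins : insert D.root {v : V | v ≠ D.root} = (Set.univ : Set V) := by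
    ext v; by_cases h : v = D.root <;> simp [h]
  have h2 := Set.ncard_insert_of_notMem (a := D.root) (s := {v : V | v ≠ D.root})
    (by simp) (Set.toFinite _)
  rw [hins, Set.ncard_univ, Nat.card_eq_fintype_card] at h2
  omega

lemma dualGraph_acyclic : D.dualGraph.IsAcyclic :=
  aux_acyclic_of_card _ D.dualGraph_connected D.dualGraph_card

end EnriquesDiagram
/-- If `p` and `q` are two distinct minimal elements of a subset `C` of an
Enriques diagram and `w` is the maximal common predecessor of `p` and `q`, then
the chain of the dual graph between `q` and `p` is the union of the chains from
`q` to `w` and from `w` to `p`; in particular `w` lies on the path from `q` to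
`p`. -/
theorem stmt17 {V : Type} [Fintype V] [DecidableEq V] (D : EnriquesDiagram V)
    (C : Set V) (p q w : V) (hp : p ∈ C) (hq : q ∈ C) (hpq : p ≠ q)
    (hpmin : ∀ c ∈ C, D.le c p → c = p) (hqmin : ∀ c ∈ C, D.le c q → c = q)
    (hwp : D.le w p) (hwq : D.le w q)
    (hwmax : ∀ x, D.le x p → D.le x q → D.le x w) :
    ∀ wk : D.dualGraph.Walk q p, wk.IsPath →
    ∀ w1 : D.dualGraph.Walk q w, w1.IsPath →
    ∀ w2 : D.dualGraph.Walk w p, w2.IsPath →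
      w ∈ wk.support ∧
      (∀ u : V, u ∈ wk.support ↔ (u ∈ w1.support ∨ u ∈ w2.support)) := by
  classical
  intro wk hwk w1 hw1 w2 hw2
  have hwnep : w ≠ p := fun h => hpq (hqmin p hp (h ▸ hwq))
  have hwneq : w ≠ q := fun h => hpq ((hpmin q hq (h ▸ hwp)).symm)
  obtain ⟨c1, hc1r, hc1p, hc1le⟩ := D.exists_child hwp hwnep
  have hwc1 : D.le w c1 := hc1p ▸ D.pred_le c1 hc1r
  have hwc1ne : w ≠ c1 := hc1p ▸ (D.pred_ne c1 hc1r)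
  have huniq := SimpleGraph.isAcyclic_iff_path_unique.mp D.dualGraph_acyclic
  -- a reference path from q to p staying above w
  obtain ⟨a1, ha1⟩ := D.exists_walk_above w q hwq
  obtain ⟨a2, ha2⟩ := D.exists_walk_above w p hwp
  have hbp := (a1.append a2.reverse).bypass_isPath
  have hwk_eq : wk = (a1.append a2.reverse).bypass :=
    Subtype.ext_iff.mp (huniq ⟨wk, hwk⟩ ⟨_, hbp⟩)
  have hsup : ∀ u ∈ wk.support, D.le w u := by
    intro u hu
    rw [hwk_eq] at hu
    have hu' := SimpleGraph.Walk.support_bypass_subset _ hu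
    rw [SimpleGraph.Walk.mem_support_append_iff] at hu'
    rcases hu' with hu' | hu'
    · exact ha1 u hu'
    · rw [SimpleGraph.Walk.support_reverse, List.mem_reverse] at hu'
      exact ha2 u hu'
  -- the boundary dart into the subtree above c1
  have hqS : ¬ D.le c1 q := by
    intro h
    exact hwc1ne (D.le_antisymm _ _ hwc1 (hwmax c1 hc1le h))
  obtain ⟨d, hd, hdfst, hdsnd⟩ := wk.exists_boundary_dart {v | ¬ D.le c1 v} hqS
    (by simpa using hc1le)
  have hsnd : D.le c1 d.snd := not_not.mp hdsnd
  have hfst_mem : d.fst ∈ wk.support := wk.dart_fst_mem_support_of_mem_darts hd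
  have hwfst : D.le w d.fst := hsup _ hfst_mem
  have hwmem : w ∈ wk.support := by
    obtain ⟨hne', hmx | hmx⟩ := d.adj
    · exact absurd (D.le_trans _ _ _ hsnd (D.prox_gt _ _ hmx.1).1) hdfst
    · have hfs : D.le d.fst d.snd := (D.prox_gt _ _ hmx.1).1
      rcases D.anc_total hsnd hfs with h | h
      · exact absurd h hdfst
      · have hfc1 : d.fst ≠ c1 := fun hh => hdfst (hh ▸ D.le_refl c1)
        have : D.le d.fst (D.pred c1) := D.pred_max c1 d.fst hc1r h hfc1
        rw [hc1p] at this
        have : d.fst = w := D.le_antisymm _ _ this hwfst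
        exact this ▸ hfst_mem
  refine ⟨hwmem, ?_⟩
  have htake : (wk.takeUntil w hwmem).IsPath := hwk.takeUntil hwmem
  have hdrop : (wk.dropUntil w hwmem).IsPath := hwk.dropUntil hwmem
  have he1 : w1 = wk.takeUntil w hwmem :=
    Subtype.ext_iff.mp (huniq ⟨w1, hw1⟩ ⟨_, htake⟩)
  have he2 : w2 = wk.dropUntil w hwmem :=
    Subtype.ext_iff.mp (huniq ⟨w2, hw2⟩ ⟨_, hdrop⟩)
  intro u
  constructor
  · intro hu
    rw [← wk.take_spec hwmem, SimpleGraph.Walk.mem_support_append_iff] at hu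
    rcases hu with hu | hu
    · exact Or.inl (by rw [he1]; exact hu)
    · exact Or.inr (by rw [he2]; exact hu)
  · intro hu
    rw [← wk.take_spec hwmem, SimpleGraph.Walk.mem_support_append_iff]
    rcases hu with hu | hu
    · exact Or.inl (by rw [he1] at hu; exact hu)
    · exact Or.inr (by rw [he2] at hu; exact hu)
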